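/- arXiv:2310.10223 — 7 statements merged into one kernel-verified Lean document; each statement's English description precedes it below -/
import Mathlib

section
/- Let F be a field and let (x_n)_{n ∈ ℤ} be a sequence of nonzero elements of F satisfying the exchange relation x_{n-1} · x_{n+1} = 1 + x_n for all n ∈ ℤ. Then the sequence is 5-periodic: x_{n+5} = x_n for all n ∈ ℤ. -/
/-- The 5-periodicity underlying the rank-2 Laurent phenomenon algebra (type `A₂`):
if `(x n)` is a sequence of nonzero elements of a field satisfying
`x (n-1) * x (n+1) = 1 + x n` for all `n`, then `x (n+5) = x n` for all `n`. -/
theorem pentagon_periodicity {F : Type*} [Field F] (x : ℤ → F)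
    (hx : ∀ n : ℤ, x n ≠ 0)
    (hrel : ∀ n : ℤ, x (n - 1) * x (n + 1) = 1 + x n) :
    ∀ n : ℤ, x (n + 5) = x n := by
  intro n
  have h1 := hrel (n + 1)
  have h2 := hrel (n + 2)
  have h3 := hrel (n + 3)
  have h4 := hrel (n + 4)
  rw [show n + 1 - 1 = n by ring, show n + 1 + 1 = n + 2 by ring] at h1
  rw [show n + 2 - 1 = n + 1 by ring, show n + 2 + 1 = n + 3 by ring] at h2
  rw [show n + 3 - 1 = n + 2 by ring, show n + 3 + 1 = n + 4 by ring] at h3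
  rw [show n + 4 - 1 = n + 3 by ring, show n + 4 + 1 = n + 5 by ring] at h4
  have hbe : x (n + 1) * x (n + 4) = 1 + x n := by
    have key : (x (n + 1) * x (n + 4)) * (x n * x (n + 2)) =
        (1 + x n) * (x n * x (n + 2)) := by
      linear_combination (x n * x (n + 1)) * h3 + x n * h2 - x n * h1
    exact mul_right_cancel₀ (mul_ne_zero (hx n) (hx (n + 2))) key
  have key2 : x (n + 5) * (x n * x (n + 3) * x (n + 1)) =
      x n * (x n * x (n + 3) * x (n + 1)) := by
    linear_combination (x n * x (n + 1)) * h4 + x n * hbe - (x n * x n) * h2 - x n * h1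
  exact mul_right_cancel₀
    (mul_ne_zero (mul_ne_zero (hx n) (hx (n + 3))) (hx (n + 1))) key2
end

section
/- Let F be a field, let a_1,…,a_8 ∈ F, and let x_1, x_2, x_3 ∈ F be nonzero. Define x_4 = (a_5 x_2 + a_8 x_3 + a_2 a_3)/x_1, x_5 = (a_6 x_3 + a_1 x_4 + a_3 a_4)/x_2, x_6 = (a_7 x_4 + a_2 x_5 + a_4 a_5)/x_3, x_8 = (a_4 x_1 + a_7 x_2 + a_1 a_2)/x_3, and x_7 = (a_3 x_8 + a_6 x_1 + a_1 a_8)/x_2. Then the remaining defining quadrics of OGr(5,10) hold: x_4 x_7 = a_8 x_5 + a_3 x_6 + a_5 a_6, x_5 x_8 = a_1 x_6 + a_4 x_7 + a_6 a_7, x_6 x_1 = a_2 x_7 + a_5 x_8 + a_7 a_8, x_1 x_5 − a_1 a_5 = x_3 x_7 − a_3 a_7, and x_2 x_6 − a_2 a_6 = x_4 x_8 − a_4 a_8. -/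
/-- The Laurent phenomenon for the initial cluster `{x₁, x₂, x₃}` of `OGr(5,10)`:
the generic torus chart parametrized by nonzero `x₁, x₂, x₃` satisfies all ten
defining quadrics of the orthogonal Grassmannian `OGr(5,10) ⊂ ℙ¹⁵`. -/
theorem ogr510_defining_quadrics {F : Type*} [Field F]
    (a₁ a₂ a₃ a₄ a₅ a₆ a₇ a₈ x₁ x₂ x₃ : F)
    (hx₁ : x₁ ≠ 0) (hx₂ : x₂ ≠ 0) (hx₃ : x₃ ≠ 0)
    (x₄ x₅ x₆ x₇ x₈ : F)
    (hx₄ : x₄ = (a₅ * x₂ + a₈ * x₃ + a₂ * a₃) / x₁)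
    (hx₅ : x₅ = (a₆ * x₃ + a₁ * x₄ + a₃ * a₄) / x₂)
    (hx₆ : x₆ = (a₇ * x₄ + a₂ * x₅ + a₄ * a₅) / x₃)
    (hx₈ : x₈ = (a₄ * x₁ + a₇ * x₂ + a₁ * a₂) / x₃)
    (hx₇ : x₇ = (a₃ * x₈ + a₆ * x₁ + a₁ * a₈) / x₂) :
    x₄ * x₇ = a₈ * x₅ + a₃ * x₆ + a₅ * a₆ ∧
    x₅ * x₈ = a₁ * x₆ + a₄ * x₇ + a₆ * a₇ ∧
    x₆ * x₁ = a₂ * x₇ + a₅ * x₈ + a₇ * a₈ ∧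
    x₁ * x₅ - a₁ * a₅ = x₃ * x₇ - a₃ * a₇ ∧
    x₂ * x₆ - a₂ * a₆ = x₄ * x₈ - a₄ * a₈ := by
  have h4 : x₁ * x₄ = a₅ * x₂ + a₈ * x₃ + a₂ * a₃ := by
    rw [hx₄]; field_simp
  have h5 : x₂ * x₅ = a₆ * x₃ + a₁ * x₄ + a₃ * a₄ := by
    rw [hx₅]; field_simp
  have h6 : x₃ * x₆ = a₇ * x₄ + a₂ * x₅ + a₄ * a₅ := by
    rw [hx₆]; field_simp
  have h8 : x₃ * x₈ = a₄ * x₁ + a₇ * x₂ + a₁ * a₂ := by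
    rw [hx₈]; field_simp
  have h7 : x₂ * x₇ = a₃ * x₈ + a₆ * x₁ + a₁ * a₈ := by
    rw [hx₇]; field_simp
  have hm : x₁ * x₂ ^ 2 * x₃ ^ 2 ≠ 0 := by
    simp [hx₁, hx₂, hx₃, pow_ne_zero]
  have hm : x₁ * x₂ ^ 2 * x₃ ^ 2 ≠ 0 := by
    simp [hx₁, hx₂, hx₃, pow_ne_zero]
  have hm4 : x₁ * x₂ ^ 2 * x₃ ≠ 0 := by
    simp [hx₁, hx₂, hx₃, pow_ne_zero]
  have hm5 : x₁ * x₂ * x₃ ^ 2 ≠ 0 := by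
    simp [hx₁, hx₂, hx₃, pow_ne_zero]
  refine ⟨?_, ?_, ?_, ?_, ?_⟩
  · refine mul_left_cancel₀ hm ?_
    linear_combination (x₁*x₂*x₃^2*x₄)*h7 + (a₃*x₁*x₂*x₃*x₄)*h8 +
      (-(a₃*x₁*x₂^2*x₃))*h6 + (-(a₈*x₁*x₂*x₃^2) - a₂*a₃*x₁*x₂*x₃)*h5 +
      (a₆*x₁*x₂*x₃^2 + a₃*a₄*x₁*x₂*x₃)*h4
  · refine mul_left_cancel₀ hm ?_
    linear_combination (-(a₄*x₁*x₂*x₃^2))*h7 + (x₁*x₂^2*x₃*x₅ - a₃*a₄*x₁*x₂*x₃)*h8 +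
      (-(a₁*x₁*x₂^2*x₃))*h6 + (a₇*x₁*x₂^2*x₃ + a₄*x₁^2*x₂*x₃)*h5 +
      (a₁*a₄*x₁*x₂*x₃)*h4
  · refine mul_left_cancel₀ hm ?_
    linear_combination (-(a₂*x₁*x₂*x₃^2))*h7 + (-(a₅*x₁*x₂^2*x₃) - a₂*a₃*x₁*x₂*x₃)*h8 +
      (x₁^2*x₂^2*x₃)*h6 + (a₂*x₁^2*x₂*x₃)*h5 +
      (a₇*x₁*x₂^2*x₃ + a₁*a₂*x₁*x₂*x₃)*h4
  · refine mul_left_cancel₀ hm4 ?_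
    linear_combination (-(x₁*x₂*x₃^2))*h7 + (-(a₃*x₁*x₂*x₃))*h8 +
      (x₁^2*x₂*x₃)*h5 + (a₁*x₁*x₂*x₃)*h4
  · refine mul_left_cancel₀ hm5 ?_
    linear_combination (-(x₁*x₂*x₃*x₄))*h8 + (x₁*x₂^2*x₃)*h6 +
      (a₂*x₁*x₂*x₃)*h5 + (-(a₄*x₁*x₂*x₃))*h4
end

section
/- With notation as in the context, the following identity holds in the quotient ring A_6 = R/I (i.e., the difference of the two sides lies in I): y_2 · y_3 = x_1 x_4 (a_5 x_2 + a_7 x_3 + a_2 a_{10}) + a_{12} x_3 (a_4 x_1 + a_1 a_9) + a_{12} x_2 (a_6 x_3 + a_8 x_4 + a_3 a_{11}), where y_2 = x_2 z_2 − a_2 x_1 − a_9 x_3 and y_3 = x_3 z_3 − a_3 x_2 − a_{10} x_4. -/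
open MvPolynomial

namespace CayleyPlane

/-- The polynomial ring `R = ℂ[a₁,…,a₁₂, x₁,…,x₁₂, z₁, z₂, z₃]` in 27 variables,
with `a`- and `x`-subscripts read mod 12 and `z`-subscripts read mod 3. -/
abbrev R6 : Type := MvPolynomial (ZMod 12 ⊕ ZMod 12 ⊕ ZMod 3) ℂ

/-- The frozen variable `aᵢ` (subscript mod 12). -/
noncomputable def a (i : ℤ) : R6 := X (Sum.inl (i : ZMod 12))

/-- The spinor coordinate `xᵢ` (subscript mod 12). -/
noncomputable def x (i : ℤ) : R6 := X (Sum.inr (Sum.inl (i : ZMod 12)))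

/-- The spinor coordinate `zₖ` (subscript mod 3). -/
noncomputable def z (k : ℤ) : R6 := X (Sum.inr (Sum.inr (k : ZMod 3)))

/-- The quadric `(aᵢ)`: `xᵢx_{i+5} − a_{i+5}x_{i+2} − aᵢz_{i+1} − a_{i+7}x_{i+3} − a_{i+2}a_{i+10}`. -/
noncomputable def quadA (i : ℤ) : R6 :=
  x i * x (i+5) - a (i+5) * x (i+2) - a i * z (i+1) - a (i+7) * x (i+3) - a (i+2) * a (i+10)

/-- The quadric `(bᵢ)`: `xᵢx_{i+4} − x_{i+2}z_{i+2} + a_{i+2}x_{i+1} + a_{i+9}x_{i+3} − aᵢa_{i+11}`. -/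
noncomputable def quadB (i : ℤ) : R6 :=
  x i * x (i+4) - x (i+2) * z (i+2) + a (i+2) * x (i+1) + a (i+9) * x (i+3) - a i * a (i+11)

/-- The quadric `(cₖ)`: `zₖz_{k+1} − x_{k+2}x_{k+8} − x_{k+5}x_{k+11} − a_{k+1}a_{k+7} − a_{k+4}a_{k+10}`. -/
noncomputable def quadC (k : ℤ) : R6 :=
  z k * z (k+1) - x (k+2) * x (k+8) - x (k+5) * x (k+11) - a (k+1) * a (k+7) - a (k+4) * a (k+10)

/-- The ideal `I ⊆ R` generated by the 27 quadrics defining the Cayley plane `𝕆ℙ² ⊂ ℙ²⁶`. -/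
noncomputable def I6 : Ideal R6 :=
  Ideal.span (Set.range quadA ∪ Set.range quadB ∪ Set.range quadC)

/-- The quadratic cluster variable `yᵢ := xᵢzᵢ − aᵢx_{i−1} − a_{i+7}x_{i+1}`. -/
noncomputable def y (i : ℤ) : R6 := x i * z i - a i * x (i-1) - a (i+7) * x (i+1)

end CayleyPlane

namespace CayleyPlane

lemma a_eq (i j : ℤ) (h : (i : ZMod 12) = (j : ZMod 12)) : a i = a j := by rw [a, a, h]
lemma x_eq (i j : ℤ) (h : (i : ZMod 12) = (j : ZMod 12)) : x i = x j := by rw [x, x, h]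
lemma z_eq (i j : ℤ) (h : (i : ZMod 3) = (j : ZMod 3)) : z i = z j := by rw [z, z, h]

lemma quadA_mem (i : ℤ) : quadA i ∈ I6 :=
  Ideal.subset_span (Set.mem_union_left _ (Set.mem_union_left _ ⟨i, rfl⟩))
lemma quadB_mem (i : ℤ) : quadB i ∈ I6 :=
  Ideal.subset_span (Set.mem_union_left _ (Set.mem_union_right _ ⟨i, rfl⟩))

end CayleyPlane

open CayleyPlane in
/-- In `A₆ = R/I`, the exchange relation for `y₂ · y₃` holds:
`y₂y₃ = x₁x₄(a₅x₂ + a₇x₃ + a₂a₁₀) + a₁₂x₃(a₄x₁ + a₁a₉) + a₁₂x₂(a₆x₃ + a₈x₄ + a₃a₁₁)`. -/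
theorem cayley_y2_y3_exchange :
    y 2 * y 3 -
      (x 1 * x 4 * (a 5 * x 2 + a 7 * x 3 + a 2 * a 10) +
        a 12 * x 3 * (a 4 * x 1 + a 1 * a 9) +
        a 12 * x 2 * (a 6 * x 3 + a 8 * x 4 + a 3 * a 11)) ∈ I6 := by
  have key : y 2 * y 3 -
      (x 1 * x 4 * (a 5 * x 2 + a 7 * x 3 + a 2 * a 10) +
        a 12 * x 3 * (a 4 * x 1 + a 1 * a 9) +
        a 12 * x 2 * (a 6 * x 3 + a 8 * x 4 + a 3 * a 11)) =
      x 1 * x 4 * quadA 12 + a 12 * x 2 * quadA 1 - a 12 * x 1 * quadB 2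
        - (x 12 * x 4 - a 11 * a 12) * quadB 1
        - (x 1 * x 5 - quadB 1) * quadB 12 := by
    simp only [quadA, quadB, y]
    rw [show (12:ℤ)+5 = 17 by norm_num, show (12:ℤ)+1 = 13 by norm_num,
        show (12:ℤ)+2 = 14 by norm_num, show (12:ℤ)+3 = 15 by norm_num,
        show (12:ℤ)+7 = 19 by norm_num, show (12:ℤ)+10 = 22 by norm_num,
        show (12:ℤ)+4 = 16 by norm_num, show (12:ℤ)+9 = 21 by norm_num,
        show (12:ℤ)+11 = 23 by norm_num,
        show (1:ℤ)+5 = 6 by norm_num, show (1:ℤ)+1 = 2 by norm_num,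
        show (1:ℤ)+2 = 3 by norm_num, show (1:ℤ)+3 = 4 by norm_num,
        show (1:ℤ)+7 = 8 by norm_num, show (1:ℤ)+10 = 11 by norm_num,
        show (1:ℤ)+4 = 5 by norm_num, show (1:ℤ)+9 = 10 by norm_num,
        show (1:ℤ)+11 = 12 by norm_num,
        show (2:ℤ)+4 = 6 by norm_num, show (2:ℤ)+2 = 4 by norm_num,
        show (2:ℤ)+1 = 3 by norm_num, show (2:ℤ)+9 = 11 by norm_num,
        show (2:ℤ)+3 = 5 by norm_num, show (2:ℤ)+11 = 13 by norm_num,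
        show (3:ℤ)+7 = 10 by norm_num, show (2:ℤ)+7 = 9 by norm_num,
        show (2:ℤ)-1 = 1 by norm_num, show (3:ℤ)-1 = 2 by norm_num,
        show (3:ℤ)+1 = 4 by norm_num,
        x_eq 17 5 (by decide), x_eq 13 1 (by decide), x_eq 14 2 (by decide),
        x_eq 15 3 (by decide), x_eq 16 4 (by decide),
        a_eq 17 5 (by decide), a_eq 14 2 (by decide), a_eq 19 7 (by decide),
        a_eq 22 10 (by decide), a_eq 21 9 (by decide), a_eq 23 11 (by decide),
        a_eq 13 1 (by decide),
        z_eq 13 1 (by decide), z_eq 14 2 (by decide), z_eq 4 1 (by decide)]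
    ring
  rw [key]
  have hA12 := quadA_mem 12
  have hA1 := quadA_mem 1
  have hB2 := quadB_mem 2
  have hB1 := quadB_mem 1
  have hB12 := quadB_mem 12
  exact sub_mem (sub_mem (sub_mem (add_mem (Ideal.mul_mem_left _ _ hA12)
    (Ideal.mul_mem_left _ _ hA1)) (Ideal.mul_mem_left _ _ hB2))
    (Ideal.mul_mem_left _ _ hB1)) (Ideal.mul_mem_left _ _ hB12)
end

section
/- With notation as in the context, the following identity holds in the quotient ring A_6 = R/I: x_1 x_5 x_9 − a_4 a_5 x_1 − a_8 a_9 x_5 − a_{12} a_1 x_9 − a_1 a_5 a_9 − a_4 a_8 a_{12} = x_3 x_7 x_{11} − a_6 a_7 x_3 − a_{10} a_{11} x_7 − a_2 a_3 x_{11} − a_3 a_7 a_{11} − a_2 a_6 a_{10}. In other words, the cubic expression u_1 defined by x_1 x_5 x_9 = u_1 + a_4 a_5 x_1 + a_8 a_9 x_5 + a_{12} a_1 x_9 + a_1 a_5 a_9 + a_4 a_8 a_{12} is invariant under the index shift i ↦ i + 2 modulo the defining relations. -/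
open MvPolynomial

open CayleyPlane in
/-- In `A₆ = R/I`, the cubic expression `u₁` defined by
`x₁x₅x₉ = u₁ + a₄a₅x₁ + a₈a₉x₅ + a₁₂a₁x₉ + a₁a₅a₉ + a₄a₈a₁₂`
is invariant under the index shift `i ↦ i + 2` modulo the defining relations. -/
theorem cayley_u1_shift_invariant :
    (x 1 * x 5 * x 9 - a 4 * a 5 * x 1 - a 8 * a 9 * x 5 - a 12 * a 1 * x 9
        - a 1 * a 5 * a 9 - a 4 * a 8 * a 12) -
      (x 3 * x 7 * x 11 - a 6 * a 7 * x 3 - a 10 * a 11 * x 7 - a 2 * a 3 * x 11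
        - a 3 * a 7 * a 11 - a 2 * a 6 * a 10) ∈ I6 := by
  have hA : ∀ i : ℤ, quadA i ∈ I6 := fun i =>
    Ideal.subset_span (Or.inl (Or.inl ⟨i, rfl⟩))
  have hB : ∀ i : ℤ, quadB i ∈ I6 := fun i =>
    Ideal.subset_span (Or.inl (Or.inr ⟨i, rfl⟩))
  have key : (x 1 * x 5 * x 9 - a 4 * a 5 * x 1 - a 8 * a 9 * x 5 - a 12 * a 1 * x 9
        - a 1 * a 5 * a 9 - a 4 * a 8 * a 12) -
      (x 3 * x 7 * x 11 - a 6 * a 7 * x 3 - a 10 * a 11 * x 7 - a 2 * a 3 * x 11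
        - a 3 * a 7 * a 11 - a 2 * a 6 * a 10)
      = a 9 * quadA 3 - a 10 * quadA 4 - a 3 * quadA 9 + a 4 * quadA 10
        + x 9 * quadB 1 - x 3 * quadB 7 := by
    simp only [quadA, quadB, a, x, z]
    norm_num
    simp only [show (13:ZMod 12) = 1 from by decide,
      show (14:ZMod 12) = 2 from by decide,
      show (15:ZMod 12) = 3 from by decide,
      show (16:ZMod 12) = 4 from by decide,
      show (17:ZMod 12) = 5 from by decide,
      show (18:ZMod 12) = 6 from by decide,
      show (19:ZMod 12) = 7 from by decide,
      show (20:ZMod 12) = 8 from by decide,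
      show (4:ZMod 3) = 1 from by decide,
      show (5:ZMod 3) = 2 from by decide,
      show (9:ZMod 3) = 3 from by decide,
      show (10:ZMod 3) = 1 from by decide,
      show (11:ZMod 3) = 2 from by decide]
    ring
  rw [key]
  exact sub_mem (add_mem (add_mem (sub_mem (sub_mem
    (Ideal.mul_mem_left _ _ (hA 3)) (Ideal.mul_mem_left _ _ (hA 4)))
    (Ideal.mul_mem_left _ _ (hA 9))) (Ideal.mul_mem_left _ _ (hA 10)))
    (Ideal.mul_mem_left _ _ (hB 1))) (Ideal.mul_mem_left _ _ (hB 7))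
end

section
/- In the lattice Λ = ℤ^6 with bilinear form ⟨u,v⟩ = u_0 v_0 − u_1 v_1 − ⋯ − u_5 v_5 and K = (−3,1,1,1,1,1), there are exactly 16 line classes (vectors v with ⟨v,v⟩ = −1 and ⟨v,K⟩ = −1). Moreover, with ρ_r(v) = v + ⟨r,v⟩ r the reflection in a root r, H = (1,0,0,0,0,0), e_i the standard basis vector in position i (1 ≤ i ≤ 5), and simple roots r_1 = e_1 − e_2, r_2 = H − e_1 − e_2 − e_3, r_3 = e_2 − e_3, r_4 = e_3 − e_4, r_5 = e_4 − e_5, the Coxeter rotation σ = ρ_{r_1} ∘ ρ_{r_2} ∘ ρ_{r_3} ∘ ρ_{r_4} ∘ ρ_{r_5} has order 8 and its action on the 16 line classes has exactly two orbits, each of size 8. -/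
set_option maxHeartbeats 4000000

namespace DP4Lattice

/-- The bilinear form `⟨u,v⟩ = u₀v₀ − u₁v₁ − ⋯ − u₅v₅` on `Λ = ℤ⁶`. -/
def B (u v : Fin 6 → ℤ) : ℤ := u 0 * v 0 - ∑ i : Fin 5, u i.succ * v i.succ

/-- The canonical class `K = (−3,1,1,1,1,1)`. -/
def K : Fin 6 → ℤ := ![-3, 1, 1, 1, 1, 1]

/-- The set of line classes: `⟨v,v⟩ = −1` and `⟨v,K⟩ = −1`. -/
def lineClasses : Set (Fin 6 → ℤ) := {v | B v v = -1 ∧ B v K = -1}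

/-- The reflection `ρ_r(v) = v + ⟨r,v⟩ r` in a root `r`. -/
def refl (r v : Fin 6 → ℤ) : Fin 6 → ℤ := v + B r v • r

/-- The hyperplane class `H = (1,0,0,0,0,0)`. -/
def H : Fin 6 → ℤ := ![1, 0, 0, 0, 0, 0]

/-- The standard basis vector `eᵢ` of `ℤ⁶`. -/
def e (i : Fin 6) : Fin 6 → ℤ := Pi.single i 1

/-- The Coxeter rotation `σ = ρ_{r₁} ∘ ρ_{r₂} ∘ ρ_{r₃} ∘ ρ_{r₄} ∘ ρ_{r₅}` for the
simple roots `r₁ = e₁−e₂`, `r₂ = H−e₁−e₂−e₃`, `r₃ = e₂−e₃`, `r₄ = e₃−e₄`,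
`r₅ = e₄−e₅` of `E₅ = D₅`. -/
def σ : (Fin 6 → ℤ) → (Fin 6 → ℤ) :=
  refl (e 1 - e 2) ∘ refl (H - e 1 - e 2 - e 3) ∘ refl (e 2 - e 3) ∘
    refl (e 3 - e 4) ∘ refl (e 4 - e 5)

/-- The `σ`-orbit of a lattice vector. -/
def orbit (v : Fin 6 → ℤ) : Set (Fin 6 → ℤ) := Set.range fun k : ℕ => σ^[k] v

lemma v6_0 (a b c d f g : ℤ) : ![a,b,c,d,f,g] 0 = a := rfl
lemma v6_1 (a b c d f g : ℤ) : ![a,b,c,d,f,g] 1 = b := rfl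
lemma v6_2 (a b c d f g : ℤ) : ![a,b,c,d,f,g] 2 = c := rfl
lemma v6_3 (a b c d f g : ℤ) : ![a,b,c,d,f,g] 3 = d := rfl
lemma v6_4 (a b c d f g : ℤ) : ![a,b,c,d,f,g] 4 = f := rfl
lemma v6_5 (a b c d f g : ℤ) : ![a,b,c,d,f,g] 5 = g := rfl

lemma funext6 {u w : Fin 6 → ℤ} (h0 : u 0 = w 0) (h1 : u 1 = w 1) (h2 : u 2 = w 2)
    (h3 : u 3 = w 3) (h4 : u 4 = w 4) (h5 : u 5 = w 5) : u = w := by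
  funext i
  fin_cases i <;> assumption

lemma B_expand (u v : Fin 6 → ℤ) :
    B u v = u 0 * v 0 - (u 1 * v 1 + u 2 * v 2 + u 3 * v 3 + u 4 * v 4 + u 5 * v 5) := by
  simp only [B, Fin.sum_univ_five,
    show ((0:Fin 5).succ) = (1:Fin 6) from rfl, show ((1:Fin 5).succ) = (2:Fin 6) from rfl,
    show ((2:Fin 5).succ) = (3:Fin 6) from rfl, show ((3:Fin 5).succ) = (4:Fin 6) from rfl,
    show ((4:Fin 5).succ) = (5:Fin 6) from rfl]

lemma hr1 : e 1 - e 2 = ![0,1,-1,0,0,0] := by decide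
lemma hr2 : H - e 1 - e 2 - e 3 = ![1,-1,-1,-1,0,0] := by decide
lemma hr3 : e 2 - e 3 = ![0,0,1,-1,0,0] := by decide
lemma hr4 : e 3 - e 4 = ![0,0,0,1,-1,0] := by decide
lemma hr5 : e 4 - e 5 = ![0,0,0,0,1,-1] := by decide

lemma refl_apply (r v : Fin 6 → ℤ) (i : Fin 6) :
    refl r v i = v i + (r 0 * v 0 - (r 1 * v 1 + r 2 * v 2 + r 3 * v 3 + r 4 * v 4 + r 5 * v 5)) * r i := by
  simp [refl, B_expand]

lemma R1 (v : Fin 6 → ℤ) : refl ![0,1,-1,0,0,0] v = ![v 0, v 2, v 1, v 3, v 4, v 5] := by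
  apply funext6 <;> (rw [refl_apply]; simp only [v6_0, v6_1, v6_2, v6_3, v6_4, v6_5]; try ring)
lemma R2 (v : Fin 6 → ℤ) : refl ![1,-1,-1,-1,0,0] v =
    ![2*v 0 + v 1 + v 2 + v 3, -v 0 - v 2 - v 3, -v 0 - v 1 - v 3, -v 0 - v 1 - v 2, v 4, v 5] := by
  apply funext6 <;> (rw [refl_apply]; simp only [v6_0, v6_1, v6_2, v6_3, v6_4, v6_5]; try ring)
lemma R3 (v : Fin 6 → ℤ) : refl ![0,0,1,-1,0,0] v = ![v 0, v 1, v 3, v 2, v 4, v 5] := by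
  apply funext6 <;> (rw [refl_apply]; simp only [v6_0, v6_1, v6_2, v6_3, v6_4, v6_5]; try ring)
lemma R4 (v : Fin 6 → ℤ) : refl ![0,0,0,1,-1,0] v = ![v 0, v 1, v 2, v 4, v 3, v 5] := by
  apply funext6 <;> (rw [refl_apply]; simp only [v6_0, v6_1, v6_2, v6_3, v6_4, v6_5]; try ring)
lemma R5 (v : Fin 6 → ℤ) : refl ![0,0,0,0,1,-1] v = ![v 0, v 1, v 2, v 3, v 5, v 4] := by
  apply funext6 <;> (rw [refl_apply]; simp only [v6_0, v6_1, v6_2, v6_3, v6_4, v6_5]; try ring)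

lemma sigma_apply (v : Fin 6 → ℤ) :
    σ v = ![2*v 0 + v 1 + v 2 + v 5, -v 0 - v 1 - v 2, -v 0 - v 2 - v 5,
            -v 0 - v 1 - v 5, v 3, v 4] := by
  have h : σ v = refl (e 1 - e 2) (refl (H - e 1 - e 2 - e 3) (refl (e 2 - e 3)
      (refl (e 3 - e 4) (refl (e 4 - e 5) v)))) := rfl
  rw [h, hr1, hr2, hr3, hr4, hr5, R5, R4, R3, R2, R1]
  apply funext6 <;>
  · simp only [v6_0, v6_1, v6_2, v6_3, v6_4, v6_5]
    try ring

lemma sigma2_apply (v : Fin 6 → ℤ) :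
    σ (σ v) = ![2*v 0 + v 1 + v 4 + v 5, v 2, -v 0 - v 1 - v 4,
                -v 0 - v 4 - v 5, -v 0 - v 1 - v 5, v 3] := by
  rw [sigma_apply v, sigma_apply]
  apply funext6 <;>
  · simp only [v6_0, v6_1, v6_2, v6_3, v6_4, v6_5]
    try ring

lemma sigma4_apply (v : Fin 6 → ℤ) :
    σ (σ (σ (σ v))) = ![3*v 0 + v 1 + v 2 + v 3 + 2*v 4 + v 5, -v 0 - v 1 - v 4,
      -v 0 - v 2 - v 4, -v 0 - v 3 - v 4, -2*v 0 - v 1 - v 2 - v 3 - v 4 - v 5,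
      -v 0 - v 4 - v 5] := by
  rw [sigma2_apply v, sigma2_apply]
  apply funext6 <;>
  · simp only [v6_0, v6_1, v6_2, v6_3, v6_4, v6_5]
    try ring

lemma sigma8 : σ^[8] = id := by
  funext v
  show σ (σ (σ (σ (σ (σ (σ (σ v))))))) = v
  rw [sigma4_apply, sigma4_apply]
  apply funext6 <;>
  · simp only [v6_0, v6_1, v6_2, v6_3, v6_4, v6_5]
    try ring

/-- First orbit: the `σ`-orbit of `e₁`. -/
def O1 : Finset (Fin 6 → ℤ) :=
  {![0,1,0,0,0,0], ![1,-1,0,-1,0,0], ![1,0,-1,0,-1,0], ![1,0,0,-1,0,-1], ![1,-1,0,0,-1,0], ![1,0,-1,0,0,-1], ![0,0,1,0,0,0], ![1,-1,-1,0,0,0]}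

/-- Second orbit: the `σ`-orbit of `e₃`. -/
def O2 : Finset (Fin 6 → ℤ) :=
  {![0,0,0,1,0,0], ![0,0,0,0,1,0], ![0,0,0,0,0,1], ![1,0,-1,-1,0,0], ![1,0,0,-1,-1,0], ![2,-1,-1,-1,-1,-1], ![1,0,0,0,-1,-1], ![1,-1,0,0,0,-1]}

/-- All sixteen line classes. -/
def L : Finset (Fin 6 → ℤ) := O1 ∪ O2

lemma mem_L_of_mem (v : Fin 6 → ℤ) (hv : v ∈ lineClasses) : v ∈ L := by
  obtain ⟨h1, h2⟩ := hv
  rw [B_expand] at h1 h2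
  simp only [K, v6_0, v6_1, v6_2, v6_3, v6_4, v6_5, mul_one] at h2
  have hv6 : v = ![v 0, v 1, v 2, v 3, v 4, v 5] := by
    funext i; fin_cases i <;> rfl
  rw [show (v ∈ L) = (![v 0, v 1, v 2, v 3, v 4, v 5] ∈ L) by rw [← hv6]]
  obtain ⟨a, ha⟩ : ∃ x, v 0 = x := ⟨_, rfl⟩
  obtain ⟨b, hb⟩ : ∃ x, v 1 = x := ⟨_, rfl⟩
  obtain ⟨c, hc⟩ : ∃ x, v 2 = x := ⟨_, rfl⟩
  obtain ⟨d, hd⟩ : ∃ x, v 3 = x := ⟨_, rfl⟩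
  obtain ⟨f, hf⟩ : ∃ x, v 4 = x := ⟨_, rfl⟩
  obtain ⟨g, hg⟩ : ∃ x, v 5 = x := ⟨_, rfl⟩
  rw [ha, hb, hc, hd, hf, hg] at h1 h2 ⊢
  have hsum : b + c + d + f + g = -3*a + 1 := by linarith
  have hsq : (b+c+d+f+g)*(b+c+d+f+g) = (-3*a+1)*(-3*a+1) := by rw [hsum]
  have key : 2*a*a - 3*a - 2 ≤ 0 := by
    nlinarith [sq_nonneg (b-c), sq_nonneg (b-d), sq_nonneg (b-f), sq_nonneg (b-g), sq_nonneg (c-d), sq_nonneg (c-f), sq_nonneg (c-g), sq_nonneg (d-f), sq_nonneg (d-g), sq_nonneg (f-g), hsq, h1]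
  have ha0 : 0 ≤ a := by
    nlinarith [key, sq_nonneg (a+1)]
  have ha2 : a ≤ 2 := by
    nlinarith [key, sq_nonneg (a-2)]
  interval_cases a
  · have lb : ∀ x ∈ [b,c,d,f,g], -1 ≤ x ∧ x ≤ 1 := by
      intro x hx
      fin_cases hx <;> constructor <;>
        nlinarith [sq_nonneg b, sq_nonneg c, sq_nonneg d, sq_nonneg f, sq_nonneg g,
          sq_nonneg (b+2), sq_nonneg (b-2), sq_nonneg (c+2), sq_nonneg (c-2),
          sq_nonneg (d+2), sq_nonneg (d-2), sq_nonneg (f+2), sq_nonneg (f-2),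
          sq_nonneg (g+2), sq_nonneg (g-2)]
    obtain ⟨hb1, hb2⟩ := lb b (by simp); obtain ⟨hc1, hc2⟩ := lb c (by simp)
    obtain ⟨hd1, hd2⟩ := lb d (by simp); obtain ⟨hf1, hf2⟩ := lb f (by simp)
    obtain ⟨hg1, hg2⟩ := lb g (by simp)
    interval_cases b <;> interval_cases c <;> interval_cases d <;> interval_cases f <;>
      interval_cases g <;> revert h1 h2 <;> decide
  · have lb : ∀ x ∈ [b,c,d,f,g], -1 ≤ x ∧ x ≤ 1 := by
      intro x hx
      fin_cases hx <;> constructor <;>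
        nlinarith [sq_nonneg b, sq_nonneg c, sq_nonneg d, sq_nonneg f, sq_nonneg g,
          sq_nonneg (b+2), sq_nonneg (b-2), sq_nonneg (c+2), sq_nonneg (c-2),
          sq_nonneg (d+2), sq_nonneg (d-2), sq_nonneg (f+2), sq_nonneg (f-2),
          sq_nonneg (g+2), sq_nonneg (g-2)]
    obtain ⟨hb1, hb2⟩ := lb b (by simp); obtain ⟨hc1, hc2⟩ := lb c (by simp)
    obtain ⟨hd1, hd2⟩ := lb d (by simp); obtain ⟨hf1, hf2⟩ := lb f (by simp)
    obtain ⟨hg1, hg2⟩ := lb g (by simp)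
    interval_cases b <;> interval_cases c <;> interval_cases d <;> interval_cases f <;>
      interval_cases g <;> revert h1 h2 <;> decide
  · -- a = 2 : all coordinates equal -1
    have hlbb : -1 ≤ b := by
      have hs : (c+d+f+g)*(c+d+f+g) = (-5-b)*(-5-b) := by
        have hh : c+d+f+g = -5-b := by linarith
        rw [hh]
      nlinarith [sq_nonneg (c-d), sq_nonneg (c-f), sq_nonneg (c-g), sq_nonneg (d-f), sq_nonneg (d-g), sq_nonneg (f-g), hs, sq_nonneg (b+2)]
    have hlbc : -1 ≤ c := by
      have hs : (b+d+f+g)*(b+d+f+g) = (-5-c)*(-5-c) := by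
        have hh : b+d+f+g = -5-c := by linarith
        rw [hh]
      nlinarith [sq_nonneg (b-d), sq_nonneg (b-f), sq_nonneg (b-g), sq_nonneg (d-f), sq_nonneg (d-g), sq_nonneg (f-g), hs, sq_nonneg (c+2)]
    have hlbd : -1 ≤ d := by
      have hs : (b+c+f+g)*(b+c+f+g) = (-5-d)*(-5-d) := by
        have hh : b+c+f+g = -5-d := by linarith
        rw [hh]
      nlinarith [sq_nonneg (b-c), sq_nonneg (b-f), sq_nonneg (b-g), sq_nonneg (c-f), sq_nonneg (c-g), sq_nonneg (f-g), hs, sq_nonneg (d+2)]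
    have hlbf : -1 ≤ f := by
      have hs : (b+c+d+g)*(b+c+d+g) = (-5-f)*(-5-f) := by
        have hh : b+c+d+g = -5-f := by linarith
        rw [hh]
      nlinarith [sq_nonneg (b-c), sq_nonneg (b-d), sq_nonneg (b-g), sq_nonneg (c-d), sq_nonneg (c-g), sq_nonneg (d-g), hs, sq_nonneg (f+2)]
    have hlbg : -1 ≤ g := by
      have hs : (b+c+d+f)*(b+c+d+f) = (-5-g)*(-5-g) := by
        have hh : b+c+d+f = -5-g := by linarith
        rw [hh]
      nlinarith [sq_nonneg (b-c), sq_nonneg (b-d), sq_nonneg (b-f), sq_nonneg (c-d), sq_nonneg (c-f), sq_nonneg (d-f), hs, sq_nonneg (g+2)]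
    have hb' : b = -1 := by linarith
    have hc' : c = -1 := by linarith
    have hd' : d = -1 := by linarith
    have hf' : f = -1 := by linarith
    have hg' : g = -1 := by linarith
    rw [hb', hc', hd', hf', hg']
    decide

lemma lineClasses_eq : lineClasses = ↑L := by
  ext v
  constructor
  · intro hv
    exact Finset.mem_coe.mpr (mem_L_of_mem v hv)
  · intro hv
    rw [Finset.mem_coe] at hv
    fin_cases hv <;> exact ⟨by decide, by decide⟩

lemma iter_mod (k : ℕ) (v : Fin 6 → ℤ) : σ^[k] v = σ^[k % 8] v := by
  conv_lhs => rw [← Nat.div_add_mod k 8]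
  rw [Function.iterate_add_apply, Function.iterate_mul, sigma8]
  simp

lemma orbit_eq (v : Fin 6 → ℤ) (O : Finset (Fin 6 → ℤ))
    (h : ∀ r : ℕ, r < 8 → σ^[r] v ∈ O)
    (h' : ∀ w ∈ O, ∃ k : ℕ, σ^[k] v = w) : orbit v = ↑O := by
  ext w
  simp only [orbit, Set.mem_range, Finset.mem_coe]
  constructor
  · rintro ⟨k, rfl⟩
    rw [iter_mod]
    exact h _ (Nat.mod_lt _ (by norm_num))
  · exact h' w

lemma s1c0 : σ^[0] ![0,1,0,0,0,0] = ![0,1,0,0,0,0] := rfl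
lemma s1c1 : σ^[1] ![0,1,0,0,0,0] = ![1,-1,0,-1,0,0] := by
  decide
lemma s1c2 : σ^[2] ![0,1,0,0,0,0] = ![1,0,-1,0,-1,0] := by
  decide
lemma s1c3 : σ^[3] ![0,1,0,0,0,0] = ![1,0,0,-1,0,-1] := by
  decide
lemma s1c4 : σ^[4] ![0,1,0,0,0,0] = ![1,-1,0,0,-1,0] := by
  decide
lemma s1c5 : σ^[5] ![0,1,0,0,0,0] = ![1,0,-1,0,0,-1] := by
  decide
lemma s1c6 : σ^[6] ![0,1,0,0,0,0] = ![0,0,1,0,0,0] := by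
  decide
lemma s1c7 : σ^[7] ![0,1,0,0,0,0] = ![1,-1,-1,0,0,0] := by
  decide

lemma s2c0 : σ^[0] ![0,0,0,1,0,0] = ![0,0,0,1,0,0] := rfl
lemma s2c1 : σ^[1] ![0,0,0,1,0,0] = ![0,0,0,0,1,0] := by
  decide
lemma s2c2 : σ^[2] ![0,0,0,1,0,0] = ![0,0,0,0,0,1] := by
  decide
lemma s2c3 : σ^[3] ![0,0,0,1,0,0] = ![1,0,-1,-1,0,0] := by
  decide
lemma s2c4 : σ^[4] ![0,0,0,1,0,0] = ![1,0,0,-1,-1,0] := by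
  decide
lemma s2c5 : σ^[5] ![0,0,0,1,0,0] = ![2,-1,-1,-1,-1,-1] := by
  decide
lemma s2c6 : σ^[6] ![0,0,0,1,0,0] = ![1,0,0,0,-1,-1] := by
  decide
lemma s2c7 : σ^[7] ![0,0,0,1,0,0] = ![1,-1,0,0,0,-1] := by
  decide

lemma orbit_eq1 : orbit ![0,1,0,0,0,0] = ↑O1 := by
  apply orbit_eq
  · intro r hr
    interval_cases r
    · rw [s1c0]; decide
    · rw [s1c1]; decide
    · rw [s1c2]; decide
    · rw [s1c3]; decide
    · rw [s1c4]; decide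
    · rw [s1c5]; decide
    · rw [s1c6]; decide
    · rw [s1c7]; decide
  · intro w hw
    fin_cases hw
    · exact ⟨0, s1c0⟩
    · exact ⟨1, s1c1⟩
    · exact ⟨2, s1c2⟩
    · exact ⟨3, s1c3⟩
    · exact ⟨4, s1c4⟩
    · exact ⟨5, s1c5⟩
    · exact ⟨6, s1c6⟩
    · exact ⟨7, s1c7⟩

lemma orbit_eq2 : orbit ![0,0,0,1,0,0] = ↑O2 := by
  apply orbit_eq
  · intro r hr
    interval_cases r
    · rw [s2c0]; decide
    · rw [s2c1]; decide
    · rw [s2c2]; decide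
    · rw [s2c3]; decide
    · rw [s2c4]; decide
    · rw [s2c5]; decide
    · rw [s2c6]; decide
    · rw [s2c7]; decide
  · intro w hw
    fin_cases hw
    · exact ⟨0, s2c0⟩
    · exact ⟨1, s2c1⟩
    · exact ⟨2, s2c2⟩
    · exact ⟨3, s2c3⟩
    · exact ⟨4, s2c4⟩
    · exact ⟨5, s2c5⟩
    · exact ⟨6, s2c6⟩
    · exact ⟨7, s2c7⟩

end DP4Lattice

open DP4Lattice in
/-- In the Néron–Severi lattice of a degree-4 del Pezzo surface there are
exactly 16 line classes; the Coxeter rotation `σ` of `E₅` has order 8 and acts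
on the 16 line classes with exactly two orbits, each of size 8. -/
theorem coxeter_rotation_E5 :
    lineClasses.ncard = 16 ∧
    σ^[8] = id ∧
    (∀ k : ℕ, 0 < k → k < 8 → σ^[k] ≠ id) ∧
    (∀ v ∈ lineClasses, σ v ∈ lineClasses) ∧
    ∃ v₁ ∈ lineClasses, ∃ v₂ ∈ lineClasses,
      (orbit v₁).ncard = 8 ∧ (orbit v₂).ncard = 8 ∧
      Disjoint (orbit v₁) (orbit v₂) ∧
      orbit v₁ ∪ orbit v₂ = lineClasses := by
  refine ⟨?_, sigma8, ?_, ?_, ![0,1,0,0,0,0], ?_, ![0,0,0,1,0,0], ?_, ?_, ?_, ?_, ?_⟩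
  · rw [lineClasses_eq, Set.ncard_coe_finset]
    decide
  · intro k hk0 hk8 h
    have hc := congrFun h ![0,1,0,0,0,0]
    rw [id_eq] at hc
    interval_cases k
    · rw [s1c1] at hc; revert hc; decide
    · rw [s1c2] at hc; revert hc; decide
    · rw [s1c3] at hc; revert hc; decide
    · rw [s1c4] at hc; revert hc; decide
    · rw [s1c5] at hc; revert hc; decide
    · rw [s1c6] at hc; revert hc; decide
    · rw [s1c7] at hc; revert hc; decide
  · intro v hv
    rw [lineClasses_eq, Finset.mem_coe] at hv ⊢
    fin_cases hv <;> (rw [sigma_apply]; decide)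
  · rw [lineClasses_eq]
    exact Finset.mem_coe.mpr (by decide)
  · rw [lineClasses_eq]
    exact Finset.mem_coe.mpr (by decide)
  · rw [orbit_eq1, Set.ncard_coe_finset]
    decide
  · rw [orbit_eq2, Set.ncard_coe_finset]
    decide
  · rw [orbit_eq1, orbit_eq2, Finset.disjoint_coe]
    decide
  · rw [orbit_eq1, orbit_eq2, lineClasses_eq, ← Finset.coe_union]
    rfl
end

section
/- In the lattice Λ = ℤ^5 with bilinear form ⟨u,v⟩ = u_0 v_0 − u_1 v_1 − u_2 v_2 − u_3 v_3 − u_4 v_4 and K = (−3,1,1,1,1), there are exactly 10 line classes (vectors v with ⟨v,v⟩ = −1 and ⟨v,K⟩ = −1). Moreover, with ρ_r(v) = v + ⟨r,v⟩ r the reflection in a root r, H = (1,0,0,0,0), e_i the standard basis vector in position i (1 ≤ i ≤ 4), and simple roots r_1 = e_1 − e_2, r_2 = H − e_1 − e_2 − e_3, r_3 = e_2 − e_3, r_4 = e_3 − e_4, the Coxeter rotation σ = ρ_{r_1} ∘ ρ_{r_2} ∘ ρ_{r_3} ∘ ρ_{r_4} has order 5 and its action on the 10 line classes has exactly two orbits,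 each of size 5. -/
namespace DP5Lattice

/-- The bilinear form `⟨u,v⟩ = u₀v₀ − u₁v₁ − u₂v₂ − u₃v₃ − u₄v₄` on `Λ = ℤ⁵`. -/
def B (u v : Fin 5 → ℤ) : ℤ := u 0 * v 0 - ∑ i : Fin 4, u i.succ * v i.succ

/-- The canonical class `K = (−3,1,1,1,1)`. -/
def K : Fin 5 → ℤ := ![-3, 1, 1, 1, 1]

/-- The set of line classes: `⟨v,v⟩ = −1` and `⟨v,K⟩ = −1`. -/
def lineClasses : Set (Fin 5 → ℤ) := {v | B v v = -1 ∧ B v K = -1}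

/-- The reflection `ρ_r(v) = v + ⟨r,v⟩ r` in a root `r`. -/
def refl (r v : Fin 5 → ℤ) : Fin 5 → ℤ := v + B r v • r

/-- The hyperplane class `H = (1,0,0,0,0)`. -/
def H : Fin 5 → ℤ := ![1, 0, 0, 0, 0]

/-- The standard basis vector `eᵢ` of `ℤ⁵`. -/
def e (i : Fin 5) : Fin 5 → ℤ := Pi.single i 1

/-- The Coxeter rotation `σ = ρ_{r₁} ∘ ρ_{r₂} ∘ ρ_{r₃} ∘ ρ_{r₄}` for the simple
roots `r₁ = e₁−e₂`, `r₂ = H−e₁−e₂−e₃`, `r₃ = e₂−e₃`, `r₄ = e₃−e₄` of `E₄ = A₄`. -/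
def σ : (Fin 5 → ℤ) → (Fin 5 → ℤ) :=
  refl (e 1 - e 2) ∘ refl (H - e 1 - e 2 - e 3) ∘ refl (e 2 - e 3) ∘ refl (e 3 - e 4)

/-- The `σ`-orbit of a lattice vector. -/
def orbit (v : Fin 5 → ℤ) : Set (Fin 5 → ℤ) := Set.range fun k : ℕ => σ^[k] v

end DP5Lattice

namespace DP5Lattice

lemma B_apply (u v : Fin 5 → ℤ) :
    B u v = u 0 * v 0 - (u 1 * v 1 + u 2 * v 2 + u 3 * v 3 + u 4 * v 4) := by
  simp [B, Fin.sum_univ_four, show ((2:Fin 4).succ) = 3 from rfl,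
    show ((3:Fin 4).succ) = 4 from rfl]

lemma refl_apply (r v : Fin 5 → ℤ) (i : Fin 5) : refl r v i = v i + B r v * r i := by
  simp [refl]

set_option maxHeartbeats 4000000 in
lemma σ_apply (v : Fin 5 → ℤ) :
    σ v = ![2*v 0 + v 1 + v 2 + v 4, -v 0 - v 1 - v 2, -v 0 - v 2 - v 4,
      -v 0 - v 1 - v 4, v 3] := by
  have h1 : e 1 - e 2 = ![0,1,-1,0,0] := by decide
  have h2 : H - e 1 - e 2 - e 3 = ![1,-1,-1,-1,0] := by decide
  have h3 : e 2 - e 3 = ![0,0,1,-1,0] := by decide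
  have h4 : e 3 - e 4 = ![0,0,0,1,-1] := by decide
  funext i
  fin_cases i <;>
    simp [σ, refl_apply, B_apply, h1, h2, h3, h4,
      Matrix.cons_val_zero, Matrix.cons_val_one, Matrix.head_cons] <;>
    ring

set_option maxHeartbeats 4000000 in
lemma σ5 : σ^[5] = id := by
  funext v
  show σ (σ (σ (σ (σ v)))) = v
  rw [σ_apply, σ_apply, σ_apply, σ_apply, σ_apply]
  funext i
  fin_cases i <;>
    simp [Matrix.cons_val_zero, Matrix.cons_val_one, Matrix.head_cons] <;> ring

/-- The ten line classes, explicitly. -/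
def L : Finset (Fin 5 → ℤ) :=
  {![0,1,0,0,0], ![0,0,1,0,0], ![0,0,0,1,0], ![0,0,0,0,1],
   ![1,-1,-1,0,0], ![1,-1,0,-1,0], ![1,-1,0,0,-1],
   ![1,0,-1,-1,0], ![1,0,-1,0,-1], ![1,0,0,-1,-1]}

def S1 : Finset (Fin 5 → ℤ) :=
  {![0,1,0,0,0], ![1,-1,0,-1,0], ![1,0,-1,0,-1], ![0,0,1,0,0], ![1,-1,-1,0,0]}

def S2 : Finset (Fin 5 → ℤ) :=
  {![0,0,0,1,0], ![0,0,0,0,1], ![1,0,-1,-1,0], ![1,0,0,-1,-1], ![1,-1,0,0,-1]}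

set_option maxHeartbeats 4000000 in
lemma lines_eq : lineClasses = ↑L := by
  ext v
  constructor
  · rintro ⟨h1, h2⟩
    obtain ⟨a, b, c, d, f, rfl⟩ : ∃ a b c d f, v = ![a,b,c,d,f] :=
      ⟨v 0, v 1, v 2, v 3, v 4, by funext i; fin_cases i <;> rfl⟩
    rw [B_apply] at h1 h2
    simp [K] at h1 h2
    have hb : 5*a^2 - 6*a - 3 ≤ 0 := by
      nlinarith [sq_nonneg (b-c), sq_nonneg (b-d), sq_nonneg (b-f), sq_nonneg (c-d),
        sq_nonneg (c-f), sq_nonneg (d-f)]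
    have ha0 : 0 ≤ a := by nlinarith
    have ha1 : a ≤ 1 := by nlinarith
    have hbb : b*b ≤ 2 := by nlinarith [sq_nonneg c, sq_nonneg d, sq_nonneg f]
    have hcc : c*c ≤ 2 := by nlinarith [sq_nonneg b, sq_nonneg d, sq_nonneg f]
    have hdd : d*d ≤ 2 := by nlinarith [sq_nonneg b, sq_nonneg c, sq_nonneg f]
    have hff : f*f ≤ 2 := by nlinarith [sq_nonneg b, sq_nonneg c, sq_nonneg d]
    have hb1 : -1 ≤ b := by nlinarith [sq_nonneg (b+1)]
    have hb2 : b ≤ 1 := by nlinarith [sq_nonneg (b-1)]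
    have hc1 : -1 ≤ c := by nlinarith [sq_nonneg (c+1)]
    have hc2 : c ≤ 1 := by nlinarith [sq_nonneg (c-1)]
    have hd1 : -1 ≤ d := by nlinarith [sq_nonneg (d+1)]
    have hd2 : d ≤ 1 := by nlinarith [sq_nonneg (d-1)]
    have hf1 : -1 ≤ f := by nlinarith [sq_nonneg (f+1)]
    have hf2 : f ≤ 1 := by nlinarith [sq_nonneg (f-1)]
    interval_cases a <;> interval_cases b <;> interval_cases c <;> interval_cases d <;>
      interval_cases f <;> revert h1 h2 <;> decide
  · intro hv
    simp only [L, Finset.coe_insert, Set.mem_insert_iff, Finset.coe_singleton,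
      Set.mem_singleton_iff] at hv
    rcases hv with rfl|rfl|rfl|rfl|rfl|rfl|rfl|rfl|rfl|rfl <;> exact ⟨by decide, by decide⟩

set_option maxHeartbeats 4000000 in
lemma orbit_eq (v : Fin 5 → ℤ) (S : Finset (Fin 5 → ℤ)) (hv : v ∈ S)
    (hcl : ∀ x ∈ S, σ x ∈ S) (hall : ∀ x ∈ S, ∃ k : ℕ, σ^[k] v = x) :
    orbit v = ↑S := by
  apply Set.Subset.antisymm
  · rintro x ⟨k, rfl⟩
    induction k with
    | zero => exact hv
    | succ n ih =>
        show σ^[n+1] v ∈ (↑S : Set _)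
        rw [Function.iterate_succ_apply']
        exact hcl _ ih
  · intro x hx
    obtain ⟨k, hk⟩ := hall x hx
    exact ⟨k, hk⟩

set_option maxHeartbeats 4000000 in
lemma orb1 : orbit ![0,1,0,0,0] = ↑S1 := by
  apply orbit_eq
  · decide
  · decide
  · intro x hx
    fin_cases hx
    exacts [⟨0, by decide⟩, ⟨1, by decide⟩, ⟨2, by decide⟩, ⟨3, by decide⟩, ⟨4, by decide⟩]

set_option maxHeartbeats 4000000 in
lemma orb2 : orbit ![0,0,0,1,0] = ↑S2 := by
  apply orbit_eq
  · decide
  · decide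
  · intro x hx
    fin_cases hx
    exacts [⟨0, by decide⟩, ⟨1, by decide⟩, ⟨2, by decide⟩, ⟨3, by decide⟩, ⟨4, by decide⟩]

end DP5Lattice

set_option maxHeartbeats 4000000

open DP5Lattice in
/-- In the Néron–Severi lattice of a degree-5 del Pezzo surface there are
exactly 10 line classes; the Coxeter rotation `σ` of `E₄` has order 5 and acts
on the 10 line classes with exactly two orbits, each of size 5. -/
theorem coxeter_rotation_E4 :
    lineClasses.ncard = 10 ∧
    σ^[5] = id ∧
    (∀ k : ℕ, 0 < k → k < 5 → σ^[k] ≠ id) ∧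
    (∀ v ∈ lineClasses, σ v ∈ lineClasses) ∧
    ∃ v₁ ∈ lineClasses, ∃ v₂ ∈ lineClasses,
      (orbit v₁).ncard = 5 ∧ (orbit v₂).ncard = 5 ∧
      Disjoint (orbit v₁) (orbit v₂) ∧
      orbit v₁ ∪ orbit v₂ = lineClasses := by
  refine ⟨?_, σ5, ?_, ?_, ![0,1,0,0,0], ?_, ![0,0,0,1,0], ?_, ?_, ?_, ?_, ?_⟩
  · rw [lines_eq, Set.ncard_coe_finset]; decide
  · intro k hk1 hk2
    interval_cases k <;>
      exact fun h => absurd (congrFun h ![(0:ℤ),1,0,0,0]) (by decide)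
  · intro v hv
    rw [lines_eq] at hv ⊢
    simp only [L, Finset.coe_insert, Set.mem_insert_iff, Finset.coe_singleton,
      Set.mem_singleton_iff] at hv ⊢
    rcases hv with rfl|rfl|rfl|rfl|rfl|rfl|rfl|rfl|rfl|rfl <;> decide
  · rw [lines_eq]; decide
  · rw [lines_eq]; decide
  · rw [orb1, Set.ncard_coe_finset]; decide
  · rw [orb2, Set.ncard_coe_finset]; decide
  · rw [orb1, orb2, Finset.disjoint_coe]; decide
  · rw [orb1, orb2, lines_eq, ← Finset.coe_union]
    exact congrArg _ (by decide : S1 ∪ S2 = L)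
end

section
/- In the lattice Λ = ℤ^8 with bilinear form ⟨u,v⟩ = u_0 v_0 − u_1 v_1 − ⋯ − u_7 v_7 and K = (−3,1,1,1,1,1,1,1), there are exactly 56 line classes (vectors v with ⟨v,v⟩ = −1 and ⟨v,K⟩ = −1). Moreover, with ρ_r(v) = v + ⟨r,v⟩ r the reflection in a root r, H = (1,0,…,0), e_i the standard basis vector in position i (1 ≤ i ≤ 7), and simple roots r_1 = e_1 − e_2, r_2 = H − e_1 − e_2 − e_3, r_3 = e_2 − e_3, r_4 = e_3 − e_4, r_5 = e_4 − e_5, r_6 = e_5 − e_6, r_7 = e_6 − e_7, the Coxeter rotation σ = ρ_{r_1} ∘ ρ_{r_2} ∘ ρ_{r_3} ∘ ρ_{r_4} ∘ ρ_{r_5} ∘ ρ_{r_6} ∘ ρ_{r_7} has order 18 and its action on the 56 line classes has exactly four orbits, of sizes 18, 18, 18 and 2. -/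
namespace DP2Lattice

/-- The bilinear form `⟨u,v⟩ = u₀v₀ − u₁v₁ − ⋯ − u₇v₇` on `Λ = ℤ⁸`. -/
def B (u v : Fin 8 → ℤ) : ℤ := u 0 * v 0 - ∑ i : Fin 7, u i.succ * v i.succ

/-- The canonical class `K = (−3,1,1,1,1,1,1,1)`. -/
def K : Fin 8 → ℤ := ![-3, 1, 1, 1, 1, 1, 1, 1]

/-- The set of line classes: `⟨v,v⟩ = −1` and `⟨v,K⟩ = −1`. -/
def lineClasses : Set (Fin 8 → ℤ) := {v | B v v = -1 ∧ B v K = -1}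

/-- The reflection `ρ_r(v) = v + ⟨r,v⟩ r` in a root `r`. -/
def refl (r v : Fin 8 → ℤ) : Fin 8 → ℤ := v + B r v • r

/-- The hyperplane class `H = (1,0,0,0,0,0,0,0)`. -/
def H : Fin 8 → ℤ := ![1, 0, 0, 0, 0, 0, 0, 0]

/-- The standard basis vector `eᵢ` of `ℤ⁸`. -/
def e (i : Fin 8) : Fin 8 → ℤ := Pi.single i 1

/-- The Coxeter rotation `σ = ρ_{r₁} ∘ ρ_{r₂} ∘ ⋯ ∘ ρ_{r₇}` for the simple roots
`r₁ = e₁−e₂`, `r₂ = H−e₁−e₂−e₃`, `r₃ = e₂−e₃`, `r₄ = e₃−e₄`, `r₅ = e₄−e₅`,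
`r₆ = e₅−e₆`, `r₇ = e₆−e₇` of `E₇`. -/
def σ : (Fin 8 → ℤ) → (Fin 8 → ℤ) :=
  refl (e 1 - e 2) ∘ refl (H - e 1 - e 2 - e 3) ∘ refl (e 2 - e 3) ∘
    refl (e 3 - e 4) ∘ refl (e 4 - e 5) ∘ refl (e 5 - e 6) ∘ refl (e 6 - e 7)

/-- The `σ`-orbit of a lattice vector. -/
def orbit (v : Fin 8 → ℤ) : Set (Fin 8 → ℤ) := Set.range fun k : ℕ => σ^[k] v

end DP2Lattice


namespace DP2Lattice

lemma B_eval (u v : Fin 8 → ℤ) : B u v =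
    u 0 * v 0 - (u 1 * v 1 + u 2 * v 2 + u 3 * v 3 + u 4 * v 4 + u 5 * v 5 + u 6 * v 6 +
      u 7 * v 7) := by
  simp [B, Fin.sum_univ_seven, show (Fin.succ 2 : Fin 8) = 3 from rfl,
    show (Fin.succ 3 : Fin 8) = 4 from rfl, show (Fin.succ 4 : Fin 8) = 5 from rfl,
    show (Fin.succ 5 : Fin 8) = 6 from rfl, show (Fin.succ 6 : Fin 8) = 7 from rfl]

lemma B_lin (r : Fin 8 → ℤ) (c : ℤ) (u v : Fin 8 → ℤ) :
    B r (c • u + v) = c * B r u + B r v := by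
  simp only [B_eval, Pi.add_apply, Pi.smul_apply, smul_eq_mul]; ring

lemma refl_lin (r : Fin 8 → ℤ) (c : ℤ) (u v : Fin 8 → ℤ) :
    refl r (c • u + v) = c • refl r u + refl r v := by
  funext i
  simp only [refl, B_lin, Pi.add_apply, Pi.smul_apply, smul_eq_mul]; ring

lemma sigma_lin (c : ℤ) (u v : Fin 8 → ℤ) : σ (c • u + v) = c • σ u + σ v := by
  simp only [σ, Function.comp_apply, refl_lin]

lemma iter_lin (n : ℕ) (c : ℤ) (u v : Fin 8 → ℤ) :
    σ^[n] (c • u + v) = c • σ^[n] u + σ^[n] v := by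
  induction n generalizing u v with
  | zero => simp
  | succ n ih =>
      rw [Function.iterate_succ_apply, sigma_lin, ih, Function.iterate_succ_apply,
        Function.iterate_succ_apply]

lemma sigma_zero : σ (0 : Fin 8 → ℤ) = 0 := by decide

lemma iter_zero (n : ℕ) : σ^[n] (0 : Fin 8 → ℤ) = 0 := Function.iterate_fixed sigma_zero n

lemma iter_smul (n : ℕ) (c : ℤ) (v : Fin 8 → ℤ) : σ^[n] (c • v) = c • σ^[n] v := by
  have h := iter_lin n c v 0
  rw [add_zero, iter_zero, add_zero] at h
  exact h

set_option maxRecDepth 100000 in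
lemma sigma18 : σ^[18] = id := by
  funext v
  have hv : v = v 0 • e 0 + (v 1 • e 1 + (v 2 • e 2 + (v 3 • e 3 + (v 4 • e 4 +
      (v 5 • e 5 + (v 6 • e 6 + v 7 • e 7)))))) := by
    funext i; fin_cases i <;> simp [e, Pi.single_apply]
  conv_lhs => rw [hv]
  rw [iter_lin, iter_lin, iter_lin, iter_lin, iter_lin, iter_lin, iter_lin,
    iter_smul, show σ^[18] (e 0) = e 0 from by decide, show σ^[18] (e 1) = e 1 from by decide,
    show σ^[18] (e 2) = e 2 from by decide, show σ^[18] (e 3) = e 3 from by decide,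
    show σ^[18] (e 4) = e 4 from by decide, show σ^[18] (e 5) = e 5 from by decide,
    show σ^[18] (e 6) = e 6 from by decide, show σ^[18] (e 7) = e 7 from by decide, id_eq]
  exact hv.symm

set_option maxHeartbeats 1000000 in
/-- The 56 line classes, listed orbit by orbit. -/
def Sset : Finset (Fin 8 → ℤ) :=
  ([
  ![0, 0, 0, 0, 0, 0, 0, 1],
    ![1, 0, -1, -1, 0, 0, 0, 0],
    ![1, 0, 0, -1, -1, 0, 0, 0],
    ![2, -1, -1, -1, -1, -1, 0, 0],
    ![2, 0, -1, -1, -1, -1, -1, 0],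
    ![3, -1, -1, -2, -1, -1, -1, -1],
    ![3, -1, -1, -1, -2, -1, -1, -1],
    ![3, -1, -1, -1, -1, -2, -1, -1],
    ![3, -1, -1, -1, -1, -1, -2, -1],
    ![3, -1, -1, -1, -1, -1, -1, -2],
    ![2, -1, 0, 0, -1, -1, -1, -1],
    ![2, -1, -1, 0, 0, -1, -1, -1],
    ![1, 0, 0, 0, 0, 0, -1, -1],
    ![1, -1, 0, 0, 0, 0, 0, -1],
    ![0, 0, 0, 1, 0, 0, 0, 0],
    ![0, 0, 0, 0, 1, 0, 0, 0],
    ![0, 0, 0, 0, 0, 1, 0, 0],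
    ![0, 0, 0, 0, 0, 0, 1, 0],
    ![0, 0, 1, 0, 0, 0, 0, 0],
    ![1, -1, -1, 0, 0, 0, 0, 0],
    ![0, 1, 0, 0, 0, 0, 0, 0],
    ![1, -1, 0, -1, 0, 0, 0, 0],
    ![1, 0, -1, 0, -1, 0, 0, 0],
    ![1, 0, 0, -1, 0, -1, 0, 0],
    ![2, -1, -1, -1, -1, 0, -1, 0],
    ![2, 0, -1, -1, -1, -1, 0, -1],
    ![2, -1, 0, -1, -1, -1, -1, 0],
    ![3, -1, -2, -1, -1, -1, -1, -1],
    ![2, 0, 0, -1, -1, -1, -1, -1],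
    ![3, -2, -1, -1, -1, -1, -1, -1],
    ![2, 0, -1, 0, -1, -1, -1, -1],
    ![2, -1, 0, -1, 0, -1, -1, -1],
    ![2, -1, -1, 0, -1, 0, -1, -1],
    ![1, 0, 0, 0, 0, -1, 0, -1],
    ![1, -1, 0, 0, 0, 0, -1, 0],
    ![1, 0, -1, 0, 0, 0, 0, -1],
    ![1, -1, 0, 0, -1, 0, 0, 0],
    ![1, 0, -1, 0, 0, -1, 0, 0],
    ![1, 0, 0, -1, 0, 0, -1, 0],
    ![2, -1, -1, -1, -1, 0, 0, -1],
    ![1, 0, 0, 0, -1, -1, 0, 0],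
    ![2, -1, -1, -1, 0, -1, -1, 0],
    ![2, 0, -1, -1, -1, 0, -1, -1],
    ![2, -1, 0, -1, -1, -1, 0, -1],
    ![2, -1, -1, 0, -1, -1, -1, 0],
    ![2, 0, -1, -1, 0, -1, -1, -1],
    ![2, -1, 0, -1, -1, 0, -1, -1],
    ![2, -1, -1, 0, -1, -1, 0, -1],
    ![1, 0, 0, 0, 0, -1, -1, 0],
    ![2, -1, -1, -1, 0, 0, -1, -1],
    ![1, 0, 0, 0, -1, 0, 0, -1],
    ![1, -1, 0, 0, 0, -1, 0, 0],
    ![1, 0, -1, 0, 0, 0, -1, 0],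
    ![1, 0, 0, -1, 0, 0, 0, -1],
    ![1, 0, 0, 0, -1, 0, -1, 0],
    ![2, -1, -1, -1, 0, -1, 0, -1]
  ] : List (Fin 8 → ℤ)).toFinset

lemma cval5 (a0 a1 a2 a3 a4 a5 a6 a7 : ℤ) : ![a0,a1,a2,a3,a4,a5,a6,a7] 5 = a5 := rfl
lemma cval6 (a0 a1 a2 a3 a4 a5 a6 a7 : ℤ) : ![a0,a1,a2,a3,a4,a5,a6,a7] 6 = a6 := rfl
lemma cval7 (a0 a1 a2 a3 a4 a5 a6 a7 : ℤ) : ![a0,a1,a2,a3,a4,a5,a6,a7] 7 = a7 := rfl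

lemma consec (b : ℤ) : 0 ≤ b * (b + 1) := by
  rcases le_or_gt 0 b with h | h
  · exact mul_nonneg h (by omega)
  · have h1 : b + 1 ≤ 0 := by omega
    nlinarith

lemma sqvals (b : ℤ) (h : b * (b + 1) ≤ 2) :
    (b = -2 ∧ b * b = 4) ∨ (b = -1 ∧ b * b = 1) ∨ (b = 0 ∧ b * b = 0) ∨
      (b = 1 ∧ b * b = 1) := by
  have h1 : -2 ≤ b := by nlinarith
  have h2 : b ≤ 1 := by nlinarith
  interval_cases b <;> decide

lemma consec2 (b : ℤ) : 0 ≤ b * (b - 1) := by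
  rcases le_or_gt 1 b with h | h
  · exact mul_nonneg (by omega) (by omega)
  · nlinarith

lemma consec3 (b : ℤ) : 0 ≤ (b + 1) * (b + 2) := by
  rcases le_or_gt 0 (b + 1) with h | h
  · exact mul_nonneg h (by omega)
  · nlinarith

set_option maxHeartbeats 4000000 in
lemma mem_S (v : Fin 8 → ℤ) (h1 : B v v = -1) (h2 : B v K = -1) : v ∈ Sset := by
  obtain ⟨a, b1, b2, b3, b4, b5, b6, b7, hv⟩ :
      ∃ a b1 b2 b3 b4 b5 b6 b7, v = ![a, b1, b2, b3, b4, b5, b6, b7] :=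
    ⟨v 0, v 1, v 2, v 3, v 4, v 5, v 6, v 7, by funext i; fin_cases i <;> rfl⟩
  subst hv
  rw [B_eval] at h1 h2
  simp only [K, Matrix.cons_val_zero, Matrix.cons_val_one, Matrix.head_cons,
    Matrix.cons_val_two, Matrix.tail_cons, Matrix.cons_val_three, Matrix.cons_val_four,
    cval5, cval6, cval7] at h1 h2
  have hC : (1 - 3*a) * (1 - 3*a) ≤ 7 * (a * a + 1) := by
    nlinarith [sq_nonneg (b1 - b2), sq_nonneg (b1 - b3), sq_nonneg (b1 - b4),
      sq_nonneg (b1 - b5), sq_nonneg (b1 - b6), sq_nonneg (b1 - b7), sq_nonneg (b2 - b3),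
      sq_nonneg (b2 - b4), sq_nonneg (b2 - b5), sq_nonneg (b2 - b6), sq_nonneg (b2 - b7),
      sq_nonneg (b3 - b4), sq_nonneg (b3 - b5), sq_nonneg (b3 - b6), sq_nonneg (b3 - b7),
      sq_nonneg (b4 - b5), sq_nonneg (b4 - b6), sq_nonneg (b4 - b7), sq_nonneg (b5 - b6),
      sq_nonneg (b5 - b7), sq_nonneg (b6 - b7), h1, h2]
  have ha0 : 0 ≤ a := by
    have h5 : -4 ≤ 5 * a := by nlinarith [hC, sq_nonneg (a + 1)]
    omega
  have ha3 : a ≤ 3 := by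
    have h5 : 5 * a ≤ 19 := by nlinarith [hC, sq_nonneg (a - 4)]
    omega
  clear hC
  simp only [Sset, List.mem_toFinset]
  interval_cases a
  · -- a = 0 : each bᵢ ∈ {0, 1}
    have hz1 : b1 * (b1 - 1) = 0 := le_antisymm (by nlinarith [consec2 b2, consec2 b3, consec2 b4, consec2 b5, consec2 b6, consec2 b7]) (consec2 b1)
    have hz2 : b2 * (b2 - 1) = 0 := le_antisymm (by nlinarith [consec2 b1, consec2 b3, consec2 b4, consec2 b5, consec2 b6, consec2 b7]) (consec2 b2)
    have hz3 : b3 * (b3 - 1) = 0 := le_antisymm (by nlinarith [consec2 b1, consec2 b2, consec2 b4, consec2 b5, consec2 b6, consec2 b7]) (consec2 b3)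
    have hz4 : b4 * (b4 - 1) = 0 := le_antisymm (by nlinarith [consec2 b1, consec2 b2, consec2 b3, consec2 b5, consec2 b6, consec2 b7]) (consec2 b4)
    have hz5 : b5 * (b5 - 1) = 0 := le_antisymm (by nlinarith [consec2 b1, consec2 b2, consec2 b3, consec2 b4, consec2 b6, consec2 b7]) (consec2 b5)
    have hz6 : b6 * (b6 - 1) = 0 := le_antisymm (by nlinarith [consec2 b1, consec2 b2, consec2 b3, consec2 b4, consec2 b5, consec2 b7]) (consec2 b6)
    have hz7 : b7 * (b7 - 1) = 0 := le_antisymm (by nlinarith [consec2 b1, consec2 b2, consec2 b3, consec2 b4, consec2 b5, consec2 b6]) (consec2 b7)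
    have hb1 : b1 = 0 ∨ b1 = 1 := by rcases mul_eq_zero.mp hz1 with h | h <;> omega
    have hb2 : b2 = 0 ∨ b2 = 1 := by rcases mul_eq_zero.mp hz2 with h | h <;> omega
    have hb3 : b3 = 0 ∨ b3 = 1 := by rcases mul_eq_zero.mp hz3 with h | h <;> omega
    have hb4 : b4 = 0 ∨ b4 = 1 := by rcases mul_eq_zero.mp hz4 with h | h <;> omega
    have hb5 : b5 = 0 ∨ b5 = 1 := by rcases mul_eq_zero.mp hz5 with h | h <;> omega
    have hb6 : b6 = 0 ∨ b6 = 1 := by rcases mul_eq_zero.mp hz6 with h | h <;> omega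
    have hb7 : b7 = 0 ∨ b7 = 1 := by rcases mul_eq_zero.mp hz7 with h | h <;> omega
    clear hz1 hz2 hz3 hz4 hz5 hz6 hz7 h1
    rcases hb1 with rfl | rfl <;> rcases hb2 with rfl | rfl <;> rcases hb3 with rfl | rfl <;>
      rcases hb4 with rfl | rfl <;> rcases hb5 with rfl | rfl <;> rcases hb6 with rfl | rfl <;>
      rcases hb7 with rfl | rfl <;> revert h2 <;> decide
  · -- a = 1 : each bᵢ ∈ {0, -1}
    have hz1 : b1 * (b1 + 1) = 0 := le_antisymm (by nlinarith [consec b2, consec b3, consec b4, consec b5, consec b6, consec b7]) (consec b1)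
    have hz2 : b2 * (b2 + 1) = 0 := le_antisymm (by nlinarith [consec b1, consec b3, consec b4, consec b5, consec b6, consec b7]) (consec b2)
    have hz3 : b3 * (b3 + 1) = 0 := le_antisymm (by nlinarith [consec b1, consec b2, consec b4, consec b5, consec b6, consec b7]) (consec b3)
    have hz4 : b4 * (b4 + 1) = 0 := le_antisymm (by nlinarith [consec b1, consec b2, consec b3, consec b5, consec b6, consec b7]) (consec b4)
    have hz5 : b5 * (b5 + 1) = 0 := le_antisymm (by nlinarith [consec b1, consec b2, consec b3, consec b4, consec b6, consec b7]) (consec b5)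
    have hz6 : b6 * (b6 + 1) = 0 := le_antisymm (by nlinarith [consec b1, consec b2, consec b3, consec b4, consec b5, consec b7]) (consec b6)
    have hz7 : b7 * (b7 + 1) = 0 := le_antisymm (by nlinarith [consec b1, consec b2, consec b3, consec b4, consec b5, consec b6]) (consec b7)
    have hb1 : b1 = 0 ∨ b1 = -1 := by rcases mul_eq_zero.mp hz1 with h | h <;> omega
    have hb2 : b2 = 0 ∨ b2 = -1 := by rcases mul_eq_zero.mp hz2 with h | h <;> omega
    have hb3 : b3 = 0 ∨ b3 = -1 := by rcases mul_eq_zero.mp hz3 with h | h <;> omega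
    have hb4 : b4 = 0 ∨ b4 = -1 := by rcases mul_eq_zero.mp hz4 with h | h <;> omega
    have hb5 : b5 = 0 ∨ b5 = -1 := by rcases mul_eq_zero.mp hz5 with h | h <;> omega
    have hb6 : b6 = 0 ∨ b6 = -1 := by rcases mul_eq_zero.mp hz6 with h | h <;> omega
    have hb7 : b7 = 0 ∨ b7 = -1 := by rcases mul_eq_zero.mp hz7 with h | h <;> omega
    clear hz1 hz2 hz3 hz4 hz5 hz6 hz7 h1
    rcases hb1 with rfl | rfl <;> rcases hb2 with rfl | rfl <;> rcases hb3 with rfl | rfl <;>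
      rcases hb4 with rfl | rfl <;> rcases hb5 with rfl | rfl <;> rcases hb6 with rfl | rfl <;>
      rcases hb7 with rfl | rfl <;> revert h2 <;> decide
  · -- a = 2 : each bᵢ ∈ {0, -1}
    have hz1 : b1 * (b1 + 1) = 0 := le_antisymm (by nlinarith [consec b2, consec b3, consec b4, consec b5, consec b6, consec b7]) (consec b1)
    have hz2 : b2 * (b2 + 1) = 0 := le_antisymm (by nlinarith [consec b1, consec b3, consec b4, consec b5, consec b6, consec b7]) (consec b2)
    have hz3 : b3 * (b3 + 1) = 0 := le_antisymm (by nlinarith [consec b1, consec b2, consec b4, consec b5, consec b6, consec b7]) (consec b3)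
    have hz4 : b4 * (b4 + 1) = 0 := le_antisymm (by nlinarith [consec b1, consec b2, consec b3, consec b5, consec b6, consec b7]) (consec b4)
    have hz5 : b5 * (b5 + 1) = 0 := le_antisymm (by nlinarith [consec b1, consec b2, consec b3, consec b4, consec b6, consec b7]) (consec b5)
    have hz6 : b6 * (b6 + 1) = 0 := le_antisymm (by nlinarith [consec b1, consec b2, consec b3, consec b4, consec b5, consec b7]) (consec b6)
    have hz7 : b7 * (b7 + 1) = 0 := le_antisymm (by nlinarith [consec b1, consec b2, consec b3, consec b4, consec b5, consec b6]) (consec b7)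
    have hb1 : b1 = 0 ∨ b1 = -1 := by rcases mul_eq_zero.mp hz1 with h | h <;> omega
    have hb2 : b2 = 0 ∨ b2 = -1 := by rcases mul_eq_zero.mp hz2 with h | h <;> omega
    have hb3 : b3 = 0 ∨ b3 = -1 := by rcases mul_eq_zero.mp hz3 with h | h <;> omega
    have hb4 : b4 = 0 ∨ b4 = -1 := by rcases mul_eq_zero.mp hz4 with h | h <;> omega
    have hb5 : b5 = 0 ∨ b5 = -1 := by rcases mul_eq_zero.mp hz5 with h | h <;> omega
    have hb6 : b6 = 0 ∨ b6 = -1 := by rcases mul_eq_zero.mp hz6 with h | h <;> omega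
    have hb7 : b7 = 0 ∨ b7 = -1 := by rcases mul_eq_zero.mp hz7 with h | h <;> omega
    clear hz1 hz2 hz3 hz4 hz5 hz6 hz7 h1
    rcases hb1 with rfl | rfl <;> rcases hb2 with rfl | rfl <;> rcases hb3 with rfl | rfl <;>
      rcases hb4 with rfl | rfl <;> rcases hb5 with rfl | rfl <;> rcases hb6 with rfl | rfl <;>
      rcases hb7 with rfl | rfl <;> revert h2 <;> decide
  · -- a = 3 : each bᵢ ∈ {-1, -2}
    have hz1 : (b1 + 1) * (b1 + 2) = 0 := le_antisymm (by nlinarith [consec3 b2, consec3 b3, consec3 b4, consec3 b5, consec3 b6, consec3 b7]) (consec3 b1)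
    have hz2 : (b2 + 1) * (b2 + 2) = 0 := le_antisymm (by nlinarith [consec3 b1, consec3 b3, consec3 b4, consec3 b5, consec3 b6, consec3 b7]) (consec3 b2)
    have hz3 : (b3 + 1) * (b3 + 2) = 0 := le_antisymm (by nlinarith [consec3 b1, consec3 b2, consec3 b4, consec3 b5, consec3 b6, consec3 b7]) (consec3 b3)
    have hz4 : (b4 + 1) * (b4 + 2) = 0 := le_antisymm (by nlinarith [consec3 b1, consec3 b2, consec3 b3, consec3 b5, consec3 b6, consec3 b7]) (consec3 b4)
    have hz5 : (b5 + 1) * (b5 + 2) = 0 := le_antisymm (by nlinarith [consec3 b1, consec3 b2, consec3 b3, consec3 b4, consec3 b6, consec3 b7]) (consec3 b5)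
    have hz6 : (b6 + 1) * (b6 + 2) = 0 := le_antisymm (by nlinarith [consec3 b1, consec3 b2, consec3 b3, consec3 b4, consec3 b5, consec3 b7]) (consec3 b6)
    have hz7 : (b7 + 1) * (b7 + 2) = 0 := le_antisymm (by nlinarith [consec3 b1, consec3 b2, consec3 b3, consec3 b4, consec3 b5, consec3 b6]) (consec3 b7)
    have hb1 : b1 = -1 ∨ b1 = -2 := by rcases mul_eq_zero.mp hz1 with h | h <;> omega
    have hb2 : b2 = -1 ∨ b2 = -2 := by rcases mul_eq_zero.mp hz2 with h | h <;> omega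
    have hb3 : b3 = -1 ∨ b3 = -2 := by rcases mul_eq_zero.mp hz3 with h | h <;> omega
    have hb4 : b4 = -1 ∨ b4 = -2 := by rcases mul_eq_zero.mp hz4 with h | h <;> omega
    have hb5 : b5 = -1 ∨ b5 = -2 := by rcases mul_eq_zero.mp hz5 with h | h <;> omega
    have hb6 : b6 = -1 ∨ b6 = -2 := by rcases mul_eq_zero.mp hz6 with h | h <;> omega
    have hb7 : b7 = -1 ∨ b7 = -2 := by rcases mul_eq_zero.mp hz7 with h | h <;> omega
    clear hz1 hz2 hz3 hz4 hz5 hz6 hz7 h1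
    rcases hb1 with rfl | rfl <;> rcases hb2 with rfl | rfl <;> rcases hb3 with rfl | rfl <;>
      rcases hb4 with rfl | rfl <;> rcases hb5 with rfl | rfl <;> rcases hb6 with rfl | rfl <;>
      rcases hb7 with rfl | rfl <;> revert h2 <;> decide

lemma lc_eq : lineClasses = ↑Sset := by
  ext v
  constructor
  · rintro ⟨h1, h2⟩
    exact mem_S v h1 h2
  · intro hv
    have hall : ∀ w ∈ Sset, B w w = -1 ∧ B w K = -1 := by decide
    exact hall v hv

lemma orbit_eq (v : Fin 8 → ℤ) (n : ℕ) (hn : 0 < n) (hfix : σ^[n] v = v) :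
    orbit v = ↑((Finset.range n).image fun k => σ^[k] v) := by
  ext w
  simp only [orbit, Set.mem_range, Finset.coe_image, Set.mem_image, Finset.mem_coe,
    Finset.mem_range]
  constructor
  · rintro ⟨k, rfl⟩
    refine ⟨k % n, Nat.mod_lt _ hn, ?_⟩
    conv_rhs => rw [← Nat.div_add_mod k n]
    rw [Nat.add_comm, Function.iterate_add_apply, Function.iterate_mul,
      Function.iterate_fixed hfix]
  · rintro ⟨k, _, rfl⟩
    exact ⟨k, rfl⟩

end DP2Lattice

set_option maxRecDepth 1000000 in
set_option maxHeartbeats 1000000 in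
open DP2Lattice in
/-- In the Néron–Severi lattice of a degree-2 del Pezzo surface there are
exactly 56 line classes; the Coxeter rotation `σ` of `E₇` has order 18 and acts
on the 56 line classes with exactly four orbits, of sizes 18, 18, 18 and 2. -/
theorem coxeter_rotation_E7 :
    lineClasses.ncard = 56 ∧
    σ^[18] = id ∧
    (∀ k : ℕ, 0 < k → k < 18 → σ^[k] ≠ id) ∧
    (∀ v ∈ lineClasses, σ v ∈ lineClasses) ∧
    ∃ v₁ ∈ lineClasses, ∃ v₂ ∈ lineClasses, ∃ v₃ ∈ lineClasses, ∃ v₄ ∈ lineClasses,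
      (orbit v₁).ncard = 18 ∧ (orbit v₂).ncard = 18 ∧ (orbit v₃).ncard = 18 ∧
      (orbit v₄).ncard = 2 ∧
      Disjoint (orbit v₁) (orbit v₂) ∧ Disjoint (orbit v₁) (orbit v₃) ∧
      Disjoint (orbit v₁) (orbit v₄) ∧ Disjoint (orbit v₂) (orbit v₃) ∧
      Disjoint (orbit v₂) (orbit v₄) ∧ Disjoint (orbit v₃) (orbit v₄) ∧
      orbit v₁ ∪ orbit v₂ ∪ orbit v₃ ∪ orbit v₄ = lineClasses := by
  have ho1 : orbit ![(0:ℤ),0,0,0,0,0,0,1] = ↑((Finset.range 18).image fun k => σ^[k] ![(0:ℤ),0,0,0,0,0,0,1]) :=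
    orbit_eq _ 18 (by norm_num) (by decide)
  have ho2 : orbit ![(0:ℤ),0,1,0,0,0,0,0] = ↑((Finset.range 18).image fun k => σ^[k] ![(0:ℤ),0,1,0,0,0,0,0]) :=
    orbit_eq _ 18 (by norm_num) (by decide)
  have ho3 : orbit ![(1:ℤ),-1,0,0,-1,0,0,0] = ↑((Finset.range 18).image fun k => σ^[k] ![(1:ℤ),-1,0,0,-1,0,0,0]) :=
    orbit_eq _ 18 (by norm_num) (by decide)
  have ho4 : orbit ![(1:ℤ),0,0,0,-1,0,-1,0] = ↑((Finset.range 2).image fun k => σ^[k] ![(1:ℤ),0,0,0,-1,0,-1,0]) :=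
    orbit_eq _ 2 (by norm_num) (by decide)
  refine ⟨?_, sigma18, ?_, ?_, ![(0:ℤ),0,0,0,0,0,0,1], ?_, ![(0:ℤ),0,1,0,0,0,0,0], ?_,
    ![(1:ℤ),-1,0,0,-1,0,0,0], ?_, ![(1:ℤ),0,0,0,-1,0,-1,0], ?_, ?_, ?_, ?_, ?_, ?_, ?_, ?_,
    ?_, ?_, ?_, ?_⟩
  · rw [lc_eq, Set.ncard_coe_finset]; decide
  · intro k hk hk' h
    have hw := congrFun h ![(0:ℤ), 1, 2, 3, 4, 5, 6, 7]
    interval_cases k <;> exact absurd hw (by decide)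
  · intro v hv
    rw [lc_eq] at hv ⊢
    have hall : ∀ w ∈ Sset, σ w ∈ Sset := by decide
    exact hall v hv
  · exact ⟨by decide, by decide⟩
  · exact ⟨by decide, by decide⟩
  · exact ⟨by decide, by decide⟩
  · exact ⟨by decide, by decide⟩
  · rw [ho1, Set.ncard_coe_finset]; decide
  · rw [ho2, Set.ncard_coe_finset]; decide
  · rw [ho3, Set.ncard_coe_finset]; decide
  · rw [ho4, Set.ncard_coe_finset]; decide
  · rw [ho1, ho2]; exact Finset.disjoint_coe.2 (by decide)
  · rw [ho1, ho3]; exact Finset.disjoint_coe.2 (by decide)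
  · rw [ho1, ho4]; exact Finset.disjoint_coe.2 (by decide)
  · rw [ho2, ho3]; exact Finset.disjoint_coe.2 (by decide)
  · rw [ho2, ho4]; exact Finset.disjoint_coe.2 (by decide)
  · rw [ho3, ho4]; exact Finset.disjoint_coe.2 (by decide)
  · rw [ho1, ho2, ho3, ho4, lc_eq, ← Finset.coe_union, ← Finset.coe_union,
      ← Finset.coe_union]
    norm_cast
end
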